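/- A consequence relation ⊢ on a sentential language is substitution-invariant, monotonic, reflexive and transitive if and only if it has a strong intersective pure semantics, i.e. a strong semantics whose truth-relation is the intersection of a family of mixed truth-relations |≡_{D_p^λ,D_c^λ} with D_p^λ = D_c^λ for every λ. -/

import Mathlib

universe u v w x

/-- Mixed truth-relation. -/
def Mixed {V : Type*} (Dp Dc : Set V) (γ δ : Set V) : Prop :=
  γ ⊆ Dp → (δ ∩ Dc).Nonempty

def Monotonic {L : Type*} (Cons : Set L → Set L → Prop) : Prop :=
  ∀ ⦃Γ₁ Γ₂ Δ₁ Δ₂ : Set L⦄, Γ₁ ⊆ Γ₂ → Δ₁ ⊆ Δ₂ → Cons Γ₁ Δ₁ → Cons Γ₂ Δ₂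

def ReflRel {L : Type*} (Cons : Set L → Set L → Prop) : Prop :=
  ∀ F : L, Cons {F} {F}

def TransRel {L : Type*} (Cons : Set L → Set L → Prop) : Prop :=
  ∀ Γ Δ : Set L, ¬ Cons Γ Δ →
    ∃ Γ' Δ' : Set L, Γ ⊆ Γ' ∧ Δ ⊆ Δ' ∧ ¬ Cons Γ' Δ' ∧ Γ' ∪ Δ' = Set.univ

def LRPermeable {L : Type*} (Cons : Set L → Set L → Prop) : Prop :=
  ∀ Γ Δ S : Set L, Cons (Γ ∪ S) Δ → Cons Γ (S ∪ Δ)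

def RLPermeable {L : Type*} (Cons : Set L → Set L → Prop) : Prop :=
  ∀ Γ Δ S : Set L, Cons Γ (S ∪ Δ) → Cons (Γ ∪ S) Δ

def Permeable {L : Type*} (Cons : Set L → Set L → Prop) : Prop :=
  LRPermeable Cons ∨ RLPermeable Cons

def CompactRel {L : Type*} (Cons : Set L → Set L → Prop) : Prop :=
  ∀ Γ Δ : Set L, Cons Γ Δ →
    ∃ Γ' Δ' : Set L, Γ' ⊆ Γ ∧ Δ' ⊆ Δ ∧ Γ'.Finite ∧ Δ'.Finite ∧ Cons Γ' Δ'

/-- Sound and complete intersective mixed semantics. -/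
def IsIMS {L V W Λ : Type*} (Cons : Set L → Set L → Prop)
    (interp : L → W → V) (Dp Dc : Λ → Set V) : Prop :=
  ∀ Γ Δ : Set L, Cons Γ Δ ↔
    ∀ (w : W) (l : Λ), Mixed (Dp l) (Dc l)
      ((fun F => interp F w) '' Γ) ((fun F => interp F w) '' Δ)

/-- Sound and complete mixed semantics (single pair). -/
def IsMixedSem {L V W : Type*} (Cons : Set L → Set L → Prop)
    (interp : L → W → V) (Dp Dc : Set V) : Prop :=
  ∀ Γ Δ : Set L, Cons Γ Δ ↔
    ∀ w : W, Mixed Dp Dc ((fun F => interp F w) '' Γ) ((fun F => interp F w) '' Δ)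

/-- Formulae of a sentential language. -/
inductive Formula (A : Type u) (C : Type u) (ar : C → ℕ) : Type u
  | atom : A → Formula A C ar
  | conn : (c : C) → (Fin (ar c) → Formula A C ar) → Formula A C ar

/-- Substitution induced by a map from atoms to formulae. -/
def Formula.subst {A C : Type u} {ar : C → ℕ} (σ : A → Formula A C ar) :
    Formula A C ar → Formula A C ar
  | .atom a => σ a
  | .conn c Fs => .conn c (fun i => (Fs i).subst σ)

def SubstInvariant {A C : Type u} {ar : C → ℕ}
    (Cons : Set (Formula A C ar) → Set (Formula A C ar) → Prop) : Prop :=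
  ∀ (σ : A → Formula A C ar) (Γ Δ : Set (Formula A C ar)),
    Cons Γ Δ → Cons (Formula.subst σ '' Γ) (Formula.subst σ '' Δ)

/-- Evaluation of formulae from truth-functions and a valuation. -/
def evalF {A C : Type u} {ar : C → ℕ} {V : Type v}
    (tf : (c : C) → (Fin (ar c) → V) → V) (v : A → V) : Formula A C ar → V
  | .atom a => v a
  | .conn c Fs => tf c (fun i => evalF tf v (Fs i))

/-- Truth-functionality of an interpretation w.r.t. truth-functions. -/
def Compositional {A C : Type u} {ar : C → ℕ} {V : Type v} {W : Type w}
    (interp : Formula A C ar → W → V)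
    (tf : (c : C) → (Fin (ar c) → V) → V) : Prop :=
  ∀ (c : C) (Fs : Fin (ar c) → Formula A C ar) (w : W),
    interp (Formula.conn c Fs) w = tf c (fun i => interp (Fs i) w)

/-- Regular connectives. -/
def RegularRel {A C : Type u} {ar : C → ℕ}
    (Cons : Set (Formula A C ar) → Set (Formula A C ar) → Prop) : Prop :=
  ∀ c : C, ∃ Bp Bc : Set (Set (Fin (ar c)) × Set (Fin (ar c))),
    ∀ (Γ Δ : Set (Formula A C ar)) (Fs : Fin (ar c) → Formula A C ar),
      (Cons (Γ ∪ {Formula.conn c Fs}) Δ ↔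
        ∀ B ∈ Bp, Cons (Γ ∪ Fs '' B.1) (Fs '' B.2 ∪ Δ)) ∧
      (Cons Γ ({Formula.conn c Fs} ∪ Δ) ↔
        ∀ B ∈ Bc, Cons (Γ ∪ Fs '' B.1) (Fs '' B.2 ∪ Δ))


lemma evalF_subst_eval {A C : Type u} {ar : C → ℕ} {V : Type v}
    (tf : (c : C) → (Fin (ar c) → V) → V) (v : A → V) (σ : A → Formula A C ar)
    (F : Formula A C ar) :
    evalF tf v (F.subst σ) = evalF tf (fun a => evalF tf v (σ a)) F := by
  induction F with
  | atom a => rfl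
  | conn c Fs ih =>
      show tf c _ = tf c _
      exact congrArg _ (funext fun i => ih i)

lemma evalF_conn_eq_subst {A C : Type u} {ar : C → ℕ}
    (v : A → Formula A C ar) (F : Formula A C ar) :
    evalF (fun c Fs => Formula.conn c Fs) v F = F.subst v := by
  induction F with
  | atom a => rfl
  | conn c Fs ih =>
      show Formula.conn c _ = Formula.conn c _
      exact congrArg _ (funext fun i => ih i)

lemma subst_atom_eq {A C : Type u} {ar : C → ℕ} (F : Formula A C ar) :
    F.subst (fun a => Formula.atom a) = F := by
  induction F with
  | atom a => rfl
  | conn c Fs ih =>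
      show Formula.conn c _ = Formula.conn c _
      exact congrArg _ (funext fun i => ih i)

/-- substitution-invariance + monotonicity + reflexivity +
transitivity is equivalent to the existence of a strong intersective pure
semantics. -/
theorem statement_8 {A C : Type u} (ar : C → ℕ)
    (Cons : Set (Formula A C ar) → Set (Formula A C ar) → Prop) :
    (SubstInvariant Cons ∧ Monotonic Cons ∧ ReflRel Cons ∧ TransRel Cons) ↔
      ∃ (V : Type u) (tf : (c : C) → (Fin (ar c) → V) → V)
        (Λ : Type u) (Dp Dc : Λ → Set V),
        (∀ l : Λ, Dp l = Dc l) ∧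
        ∀ Γ Δ : Set (Formula A C ar), Cons Γ Δ ↔
          ∀ (v : A → V) (l : Λ),
            Mixed (Dp l) (Dc l)
              ((fun F => evalF tf v F) '' Γ) ((fun F => evalF tf v F) '' Δ) := by
  constructor
  · rintro ⟨hsub, hmono, hrefl, htrans⟩
    refine ⟨Formula A C ar, fun c Fs => Formula.conn c Fs,
      {p : Set (Formula A C ar) × Set (Formula A C ar) //
        ¬ Cons p.1 p.2 ∧ p.1 ∪ p.2 = Set.univ},
      fun l => l.1.1, fun l => l.1.1, fun _ => rfl, ?_⟩
    intro Γ Δ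
    constructor
    · rintro h v ⟨⟨Γ', Δ'⟩, hn, hu⟩ hγ
      by_contra hne
      have himg : ∀ S : Set (Formula A C ar),
          (fun F => evalF (fun c Fs => Formula.conn c Fs) v F) '' S =
            Formula.subst v '' S := by
        intro S
        exact Set.image_congr fun F _ => evalF_conn_eq_subst v F
      have h1 : Cons (Formula.subst v '' Γ) (Formula.subst v '' Δ) := hsub v Γ Δ h
      have hδ : Formula.subst v '' Δ ⊆ Δ' := by
        intro x hx
        have hx' : x ∉ Γ' := by
          intro hxΓ'
          exact hne ⟨x, by rw [himg]; exact hx, hxΓ'⟩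
        have : x ∈ Γ' ∪ Δ' := hu ▸ Set.mem_univ x
        exact this.resolve_left hx'
      have hγ' : Formula.subst v '' Γ ⊆ Γ' := by rw [← himg]; exact hγ
      exact hn (hmono hγ' hδ h1)
    · intro h
      by_contra hc
      obtain ⟨Γ', Δ', hΓ, hΔ, hn, hu⟩ := htrans Γ Δ hc
      have himg : ∀ S : Set (Formula A C ar),
          (fun F => evalF (fun c Fs => Formula.conn c Fs)
            (fun a => Formula.atom a) F) '' S = S := by
        intro S
        have : ∀ F : Formula A C ar,
            evalF (fun c Fs => Formula.conn c Fs) (fun a => Formula.atom a) F = F := by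
          intro F; rw [evalF_conn_eq_subst, subst_atom_eq]
        simp only [this, Set.image_id']
      have := h (fun a => Formula.atom a) ⟨(Γ', Δ'), hn, hu⟩
      rw [Mixed, himg, himg] at this
      obtain ⟨F, hFΔ, hFΓ'⟩ := this hΓ
      exact hn (hmono (Set.singleton_subset_iff.2 hFΓ')
        (Set.singleton_subset_iff.2 (hΔ hFΔ)) (hrefl F))
  · rintro ⟨V, tf, Λ, Dp, Dc, hDD, hsem⟩
    refine ⟨?_, ?_, ?_, ?_⟩
    · intro σ Γ Δ h
      rw [hsem] at h ⊢
      intro v l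
      have key : ∀ S : Set (Formula A C ar),
          (fun F => evalF tf v F) '' (Formula.subst σ '' S) =
            (fun F => evalF tf (fun a => evalF tf v (σ a)) F) '' S := by
        intro S
        rw [Set.image_image]
        exact Set.image_congr fun F _ => evalF_subst_eval tf v σ F
      rw [key, key]
      exact h (fun a => evalF tf v (σ a)) l
    · intro Γ₁ Γ₂ Δ₁ Δ₂ h12 h34 h
      rw [hsem] at h ⊢
      intro v l hγ
      obtain ⟨x, hx1, hx2⟩ := h v l ((Set.image_mono h12).trans hγ)
      exact ⟨x, Set.image_mono h34 hx1, hx2⟩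
    · intro F
      rw [hsem]
      intro v l hγ
      refine ⟨evalF tf v F, ⟨F, rfl, rfl⟩, ?_⟩
      rw [← hDD l]
      exact hγ ⟨F, rfl, rfl⟩
    · intro Γ Δ h
      rw [hsem] at h
      push_neg at h
      obtain ⟨v, l, hM⟩ := h
      rw [Mixed] at hM
      push_neg at hM
      obtain ⟨hγ, hδ⟩ := hM
      refine ⟨{F | evalF tf v F ∈ Dp l}, {F | evalF tf v F ∉ Dp l}, ?_, ?_, ?_, ?_⟩
      · intro F hF
        exact hγ ⟨F, hF, rfl⟩
      · intro F hF hmem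
        exact absurd (show ((fun F => evalF tf v F) '' Δ ∩ Dc l).Nonempty from
          ⟨evalF tf v F, ⟨F, hF, rfl⟩, hDD l ▸ hmem⟩)
          (by rw [hδ]; exact Set.not_nonempty_empty)
      · rw [hsem]
        push_neg
        refine ⟨v, l, ?_⟩
        rw [Mixed]
        push_neg
        refine ⟨?_, ?_⟩
        · rintro x ⟨F, hF, rfl⟩; exact hF
        · rw [Set.eq_empty_iff_forall_notMem]
          rintro x ⟨⟨F, hF, rfl⟩, hx⟩
          exact hF (hDD l ▸ hx)
      · ext F
        simp [Classical.em]
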